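/- Let $\alpha_i \in [0,1]$, $\tau_n = \sum_{k=1}^n \alpha_k(1-\alpha_k)$, $\sigma(y) = \min\{1, (\pi y)^{-1/2}\}$, and suppose $\epsilon_n \leq (1-\alpha_n) f(\tau_n)$ where $f: [0,\infty) \to [0,\infty)$ is nonincreasing. Then with $\eta = \sqrt{1 + 4/\pi}$, for all $n$: $\sum_{i=1}^n 2\alpha_i \epsilon_i \sigma(\tau_n - \tau_i) \leq \eta \int_0^{\tau_n} f(s)/\sqrt{\tau_n - s}\, ds$. -/

import Mathlib

open Finset

/-- `σ(y) = min{1, 1/√(π y)}` for `y > 0`, with `σ(y) = 1` for `y ≤ 0`. -/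
noncomputable def sigmaKM (y : ℝ) : ℝ :=
  if y ≤ 0 then 1 else min 1 (1 / Real.sqrt (Real.pi * y))

/-- `τ n = ∑_{k=1}^n α k (1 - α k)`. -/
noncomputable def tauKM (α : ℕ → ℝ) (n : ℕ) : ℝ :=
  ∑ k ∈ Finset.Icc 1 n, α k * (1 - α k)

lemma sigmaKM_nonneg (y : ℝ) : 0 ≤ sigmaKM y := by
  unfold sigmaKM
  split
  · norm_num
  · exact le_min zero_le_one (div_nonneg zero_le_one (Real.sqrt_nonneg _))

lemma sigmaKM_le_one (y : ℝ) : sigmaKM y ≤ 1 := by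
  unfold sigmaKM
  split
  · exact le_rfl
  · exact min_le_left _ _

/-- key pointwise inequality -/
lemma keyKM {y Δ : ℝ} (hy : 0 ≤ y) (hΔ0 : 0 ≤ Δ) (hΔ : Δ ≤ 1/4) :
    Δ * sigmaKM y ≤ Real.sqrt (1 + 4 / Real.pi) * (Real.sqrt (y + Δ) - Real.sqrt y) := by
  have hπ := Real.pi_pos
  have ha := Real.sq_sqrt (show (0:ℝ) ≤ y + Δ by linarith)
  have hb := Real.sq_sqrt hy
  have han := Real.sqrt_nonneg (y + Δ)
  have hbn := Real.sqrt_nonneg y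
  have hσ0 := sigmaKM_nonneg y
  have hσ1 := sigmaKM_le_one y
  -- square bound for the sum of square roots
  have h1 : (Real.sqrt (y + Δ) + Real.sqrt y) ^ 2 ≤ 4 * y + 2 * Δ := by
    nlinarith [two_mul_le_add_sq (Real.sqrt (y + Δ)) (Real.sqrt y)]
  have hkey : sigmaKM y * (Real.sqrt (y + Δ) + Real.sqrt y) ≤ Real.sqrt (1 + 4 / Real.pi) := by
    rw [Real.le_sqrt (by positivity) (by positivity), mul_pow]
    have hσsq1 : sigmaKM y ^ 2 ≤ 1 := by nlinarith
    rcases le_or_gt (Real.pi * y) 1 with hc | hc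
    · -- small y : use σ ≤ 1
      have hy' : 4 * y ≤ 4 / Real.pi := by
        rw [le_div_iff₀ hπ]; nlinarith
      have h4π : 0 < 4 / Real.pi := by positivity
      nlinarith [sq_nonneg (Real.sqrt (y + Δ) + Real.sqrt y),
        mul_le_mul hσsq1 h1 (sq_nonneg (Real.sqrt (y + Δ) + Real.sqrt y)) zero_le_one]
    · -- large y : use σ ≤ 1/√(π y)
      have hy0 : 0 < y := by nlinarith
      have hσle : sigmaKM y ≤ 1 / Real.sqrt (Real.pi * y) := by
        unfold sigmaKM
        split
        · linarith
        · exact min_le_right _ _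
      have hsq : Real.sqrt (Real.pi * y) ^ 2 = Real.pi * y :=
        Real.sq_sqrt (by positivity)
      have hsqpos : 0 < Real.sqrt (Real.pi * y) := Real.sqrt_pos.2 (by positivity)
      have h2 : sigmaKM y * Real.sqrt (Real.pi * y) ≤ 1 := by
        rw [← le_div_iff₀ hsqpos]
        simpa [one_div] using hσle
      have hσsq : sigmaKM y ^ 2 * (Real.pi * y) ≤ 1 := by
        calc sigmaKM y ^ 2 * (Real.pi * y) = (sigmaKM y * Real.sqrt (Real.pi * y)) ^ 2 := by
              rw [mul_pow, hsq]
          _ ≤ 1 := by nlinarith [mul_nonneg hσ0 hsqpos.le]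
      -- goal: (σ (a+b))^2 ≤ 1 + 4/π ; multiply by π > 0
      rw [show (1:ℝ) + 4 / Real.pi = (Real.pi + 4) / Real.pi by field_simp, le_div_iff₀ hπ]
      nlinarith [sq_nonneg (Real.sqrt (y + Δ) + Real.sqrt y), sq_nonneg (sigmaKM y),
        mul_le_mul_of_nonneg_left h1 (mul_nonneg (sq_nonneg (sigmaKM y)) hπ.le),
        mul_le_mul_of_nonneg_left hσsq1 hπ.le,
        mul_nonneg (sq_nonneg (sigmaKM y)) hπ.le]
  have hdiff : 0 ≤ Real.sqrt (y + Δ) - Real.sqrt y :=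
    sub_nonneg.2 (Real.sqrt_le_sqrt (by linarith))
  have hΔeq : Δ = (Real.sqrt (y + Δ) + Real.sqrt y) * (Real.sqrt (y + Δ) - Real.sqrt y) := by
    linear_combination hb - ha
  calc Δ * sigmaKM y
      = sigmaKM y * (Real.sqrt (y + Δ) + Real.sqrt y) * (Real.sqrt (y + Δ) - Real.sqrt y) := by
        linear_combination sigmaKM y * hΔeq
    _ ≤ Real.sqrt (1 + 4 / Real.pi) * (Real.sqrt (y + Δ) - Real.sqrt y) :=
        mul_le_mul_of_nonneg_right hkey hdiff

lemma one_div_sqrt_eq_rpow (x : ℝ) : 1 / Real.sqrt x = x ^ (-(1/2) : ℝ) := by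
  rcases lt_or_ge x 0 with hx | hx
  · rw [Real.sqrt_eq_zero_of_nonpos hx.le, Real.rpow_def_of_neg hx,
      show (-(1/2) : ℝ) * Real.pi = -(Real.pi / 2) by ring, Real.cos_neg,
      Real.cos_pi_div_two]
    simp
  · rw [one_div, Real.rpow_neg hx, ← Real.sqrt_eq_rpow]

theorem stmt13 (α : ℕ → ℝ) (hα : ∀ n, α n ∈ Set.Icc (0:ℝ) 1)
    (ε : ℕ → ℝ) (hε : ∀ n, 0 ≤ ε n)
    (f : ℝ → ℝ) (hf_nonneg : ∀ s ∈ Set.Ici (0:ℝ), 0 ≤ f s)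
    (hf_anti : AntitoneOn f (Set.Ici 0))
    (hεf : ∀ n, 1 ≤ n → ε n ≤ (1 - α n) * f (tauKM α n)) :
    ∀ n, ∑ i ∈ Finset.Icc 1 n, 2 * α i * ε i * sigmaKM (tauKM α n - tauKM α i)
      ≤ Real.sqrt (1 + 4 / Real.pi)
          * ∫ s in (0:ℝ)..(tauKM α n), f s / Real.sqrt (tauKM α n - s) := by
  intro n
  set η := Real.sqrt (1 + 4 / Real.pi) with hη
  have hηn : 0 ≤ η := Real.sqrt_nonneg _
  set T := tauKM α n with hT
  have hτ0 : tauKM α 0 = 0 := by simp [tauKM]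
  have hstep : ∀ k, tauKM α (k+1) = tauKM α k + α (k+1) * (1 - α (k+1)) := by
    intro k
    rw [tauKM, tauKM, Finset.sum_Icc_succ_top (Nat.succ_le_succ (Nat.zero_le _))]
  have hτmono : Monotone (tauKM α) := by
    apply monotone_nat_of_le_succ
    intro k
    rw [hstep k]
    nlinarith [(hα (k+1)).1, (hα (k+1)).2]
  have hτnonneg : ∀ k, 0 ≤ tauKM α k := fun k => hτ0 ▸ hτmono (Nat.zero_le k)
  -- the integrand equals an rpow
  have hgeq : ∀ s : ℝ, 1 / Real.sqrt (T - s) = (T - s) ^ (-(1/2) : ℝ) := fun s =>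
    one_div_sqrt_eq_rpow _
  have hg_nonneg : ∀ s : ℝ, 0 ≤ 1 / Real.sqrt (T - s) := fun s =>
    div_nonneg zero_le_one (Real.sqrt_nonneg _)
  -- integrability of 1/√(T-s) on any interval
  have hgint : ∀ a b : ℝ, IntervalIntegrable (fun s => 1 / Real.sqrt (T - s)) MeasureTheory.volume a b := by
    intro a b
    have h := (intervalIntegral.intervalIntegrable_rpow'
      (show (-1:ℝ) < -(1/2) by norm_num) (a := T - a) (b := T - b)).comp_sub_left T
    simp only [sub_sub_cancel] at h
    simpa only [← hgeq] using h
  have hgmeas : Measurable (fun s : ℝ => 1 / Real.sqrt (T - s)) := by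
    simp only [one_div]
    exact ((Real.continuous_sqrt.comp (continuous_const.sub continuous_id)).measurable).inv
  -- integrability of f * g on suitable intervals
  have hInt : ∀ a b : ℝ, 0 ≤ a → a ≤ b →
      IntervalIntegrable (fun s => f s * (1 / Real.sqrt (T - s))) MeasureTheory.volume a b := by
    intro a b ha hab
    rw [intervalIntegrable_iff_integrableOn_Ioc_of_le hab]
    have hfm : AEMeasurable f (MeasureTheory.volume.restrict (Set.Ioc a b)) :=
      aemeasurable_restrict_of_antitoneOn measurableSet_Ioc
        (hf_anti.mono (fun s hs => le_trans ha hs.1.le))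
    have hgIoc : MeasureTheory.IntegrableOn (fun s => 1 / Real.sqrt (T - s)) (Set.Ioc a b) :=
      (intervalIntegrable_iff_integrableOn_Ioc_of_le hab).1 (hgint a b)
    apply MeasureTheory.Integrable.mono'
      (g := fun s => f 0 * (1 / Real.sqrt (T - s)))
    · exact hgIoc.const_mul (f 0)
    · exact hfm.aestronglyMeasurable.mul hgmeas.aemeasurable.aestronglyMeasurable
    · refine (MeasureTheory.ae_restrict_iff' measurableSet_Ioc).2 (MeasureTheory.ae_of_all _ ?_)
      intro s hs
      have hs0 : (0:ℝ) ≤ s := le_trans ha hs.1.le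
      have hfs : 0 ≤ f s := hf_nonneg s hs0
      have hfle : f s ≤ f 0 := hf_anti (Set.mem_Ici.2 le_rfl) hs0 hs0
      rw [Real.norm_eq_abs, abs_of_nonneg (mul_nonneg hfs (hg_nonneg s))]
      exact mul_le_mul_of_nonneg_right hfle (hg_nonneg s)
  -- value of ∫ g
  have hgval : ∀ a b : ℝ, b ≤ T →
      ∫ s in a..b, (1 : ℝ) / Real.sqrt (T - s)
        = 2 * Real.sqrt (T - a) - 2 * Real.sqrt (T - b) := by
    intro a b hbT
    simp only [hgeq]
    rw [intervalIntegral.integral_comp_sub_left (fun x => x ^ (-(1/2):ℝ)) T]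
    rw [integral_rpow (Or.inl (by norm_num))]
    have e1 : (T - a) ^ ((-(1/2):ℝ) + 1) = Real.sqrt (T - a) := by
      rw [Real.sqrt_eq_rpow]; norm_num
    have e2 : (T - b) ^ ((-(1/2):ℝ) + 1) = Real.sqrt (T - b) := by
      rw [Real.sqrt_eq_rpow]; norm_num
    rw [e1, e2]
    ring
  -- per-interval bound
  have hterm : ∀ k, k < n →
      2 * α (k+1) * ε (k+1) * sigmaKM (T - tauKM α (k+1))
        ≤ η * ∫ s in (tauKM α k)..(tauKM α (k+1)), f s * (1 / Real.sqrt (T - s)) := by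
    intro k hk
    set a := tauKM α k with haa
    set b := tauKM α (k+1) with hbb
    have hab : a ≤ b := hτmono (Nat.le_succ k)
    have ha0 : 0 ≤ a := hτnonneg k
    have hbT : b ≤ T := hτmono hk
    have hb0 : 0 ≤ b := le_trans ha0 hab
    obtain ⟨hα0, hα1⟩ := hα (k+1)
    have hΔ : b - a = α (k+1) * (1 - α (k+1)) := by rw [haa, hbb, hstep k]; ring
    have hΔ0 : 0 ≤ b - a := by linarith
    have hΔ14 : b - a ≤ 1/4 := by rw [hΔ]; nlinarith [sq_nonneg (α (k+1) - 1/2)]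
    have hfb : 0 ≤ f b := hf_nonneg b hb0
    have hεb : ε (k+1) ≤ (1 - α (k+1)) * f b := hεf (k+1) (Nat.succ_le_succ (Nat.zero_le _))
    have hy : 0 ≤ T - b := by linarith
    have hkey := keyKM hy hΔ0 hΔ14
    have hyΔ : (T - b) + (b - a) = T - a := by ring
    rw [hyΔ] at hkey
    have hσn := sigmaKM_nonneg (T - b)
    -- step 1
    have h1 : 2 * α (k+1) * ε (k+1) * sigmaKM (T - b)
        ≤ 2 * f b * ((b - a) * sigmaKM (T - b)) := by
      have : α (k+1) * ε (k+1) ≤ (b - a) * f b := by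
        rw [hΔ]
        calc α (k+1) * ε (k+1) ≤ α (k+1) * ((1 - α (k+1)) * f b) :=
          mul_le_mul_of_nonneg_left hεb hα0
        _ = α (k+1) * (1 - α (k+1)) * f b := by ring
      nlinarith
    -- step 2 : key inequality
    have h2 : 2 * f b * ((b - a) * sigmaKM (T - b))
        ≤ 2 * f b * (η * (Real.sqrt (T - a) - Real.sqrt (T - b))) := by
      apply mul_le_mul_of_nonneg_left hkey (by linarith)
    -- step 3 : rewrite as integral of constant
    have h3 : 2 * f b * (η * (Real.sqrt (T - a) - Real.sqrt (T - b)))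
        = η * ∫ s in a..b, f b * (1 / Real.sqrt (T - s)) := by
      rw [intervalIntegral.integral_const_mul, hgval a b hbT]
      ring
    -- step 4 : monotone comparison
    have h4 : ∫ s in a..b, f b * (1 / Real.sqrt (T - s))
        ≤ ∫ s in a..b, f s * (1 / Real.sqrt (T - s)) := by
      apply intervalIntegral.integral_mono_on hab
        ((hgint a b).const_mul (f b)) (hInt a b ha0 hab)
      · intro s hs
        have hs0 : (0:ℝ) ≤ s := le_trans ha0 hs.1
        exact mul_le_mul_of_nonneg_right (hf_anti hs0 hb0 hs.2) (hg_nonneg s)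
    calc 2 * α (k+1) * ε (k+1) * sigmaKM (T - b)
        ≤ 2 * f b * ((b - a) * sigmaKM (T - b)) := h1
      _ ≤ 2 * f b * (η * (Real.sqrt (T - a) - Real.sqrt (T - b))) := h2
      _ = η * ∫ s in a..b, f b * (1 / Real.sqrt (T - s)) := h3
      _ ≤ η * ∫ s in a..b, f s * (1 / Real.sqrt (T - s)) :=
          mul_le_mul_of_nonneg_left h4 hηn
  -- reindex the sum
  have hre : ∑ i ∈ Finset.Icc 1 n, 2 * α i * ε i * sigmaKM (T - tauKM α i)
      = ∑ k ∈ Finset.range n, 2 * α (k+1) * ε (k+1) * sigmaKM (T - tauKM α (k+1)) := by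
    rw [← Finset.Ico_add_one_right_eq_Icc, Finset.sum_Ico_eq_sum_range]
    simp [Nat.add_comm]
  calc ∑ i ∈ Finset.Icc 1 n, 2 * α i * ε i * sigmaKM (T - tauKM α i)
      = ∑ k ∈ Finset.range n, 2 * α (k+1) * ε (k+1) * sigmaKM (T - tauKM α (k+1)) := hre
    _ ≤ ∑ k ∈ Finset.range n, η * ∫ s in (tauKM α k)..(tauKM α (k+1)),
          f s * (1 / Real.sqrt (T - s)) :=
        Finset.sum_le_sum (fun k hk => hterm k (Finset.mem_range.1 hk))
    _ = η * ∑ k ∈ Finset.range n, ∫ s in (tauKM α k)..(tauKM α (k+1)),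
          f s * (1 / Real.sqrt (T - s)) := by rw [Finset.mul_sum]
    _ = η * ∫ s in (tauKM α 0)..(tauKM α n), f s * (1 / Real.sqrt (T - s)) := by
        rw [intervalIntegral.sum_integral_adjacent_intervals
          (fun k hk => hInt _ _ (hτnonneg k) (hτmono (Nat.le_succ k)))]
    _ = η * ∫ s in (0:ℝ)..(tauKM α n), f s / Real.sqrt (tauKM α n - s) := by
        rw [hτ0]
        congr 1
        apply intervalIntegral.integral_congr
        intro s _
        show f s * (1 / Real.sqrt (T - s)) = f s / Real.sqrt (T - s)
        rw [mul_one_div]
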